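/- If b₁ and b₂ both satisfy lim_{n→∞} (1/n)·d_p(x_n, b_i Λ_n) = 0 for the same sequence x_n in GL_d(ℚ_p), then lim_{n→∞} (1/n)·d_p(e, Λ_n⁻¹ b₁⁻¹ b₂ Λ_n) = 0, hence b₁⁻¹b₂ ∈ P_p and b₁, b₂ define the same element of the flag manifold B_p = GL_d(ℚ_p)/P_p. -/

import Mathlib

open Matrix
noncomputable def lnplus (x : ℝ) : ℝ := max (Real.log x) 0

noncomputable def opNormP (p : ℕ) [Fact p.Prime] {n : Type*} [Fintype n] [DecidableEq n]
    (g : Matrix n n ℚ_[p]) : ℝ :=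
  ‖LinearMap.toContinuousLinearMap g.mulVecLin‖

noncomputable def dP (p : ℕ) [Fact p.Prime] {d : ℕ}
    (g h : GL (Fin d) ℚ_[p]) : ℝ :=
  lnplus (opNormP p ((g⁻¹ * h : GL (Fin d) ℚ_[p]) : Matrix (Fin d) (Fin d) ℚ_[p]))
  + lnplus (opNormP p ((h⁻¹ * g : GL (Fin d) ℚ_[p]) : Matrix (Fin d) (Fin d) ℚ_[p]))


/-- The invertible diagonal matrix with entries `p^(f i)`. -/
noncomputable def diagGL (p : ℕ) [hp : Fact p.Prime] {d : ℕ} (f : Fin d → ℤ) :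
    GL (Fin d) ℚ_[p] :=
  ⟨Matrix.diagonal fun i => (p : ℚ_[p]) ^ f i,
   Matrix.diagonal fun i => (p : ℚ_[p]) ^ (-f i),
   by
     rw [Matrix.diagonal_mul_diagonal]
     have hne : (p : ℚ_[p]) ≠ 0 := Nat.cast_ne_zero.mpr hp.out.ne_zero
     simp [mul_inv_cancel₀ (zpow_ne_zero _ hne)],
   by
     rw [Matrix.diagonal_mul_diagonal]
     have hne : (p : ℚ_[p]) ≠ 0 := Nat.cast_ne_zero.mpr hp.out.ne_zero
     simp [inv_mul_cancel₀ (zpow_ne_zero _ hne)]⟩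

/-- `Λ_n`: the diagonal matrix with entries `p^{-⌊nλ_i/ln p⌋}`. -/
noncomputable def LamP (p : ℕ) [Fact p.Prime] {d : ℕ} (lam : Fin d → ℝ) (n : ℕ) :
    GL (Fin d) ℚ_[p] :=
  diagGL p fun i => -⌊(n * lam i) / Real.log p⌋

/- ============ auxiliary lemmas ============ -/

lemma lnplus_nonneg (x : ℝ) : 0 ≤ lnplus x := le_max_right _ _

lemma log_le_lnplus (x : ℝ) : Real.log x ≤ lnplus x := le_max_left _ _

lemma lnplus_le_lnplus {a b : ℝ} (ha : 0 ≤ a) (h : a ≤ b) : lnplus a ≤ lnplus b := by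
  refine max_le ?_ (le_max_right _ _)
  rcases eq_or_lt_of_le ha with h0 | h0
  · rw [← h0, Real.log_zero]; exact le_max_right _ _
  · exact le_trans (Real.log_le_log h0 h) (le_max_left _ _)

lemma lnplus_mul_le {a b : ℝ} (ha : 0 ≤ a) (hb : 0 ≤ b) :
    lnplus (a * b) ≤ lnplus a + lnplus b := by
  have hR : 0 ≤ lnplus a + lnplus b := add_nonneg (lnplus_nonneg a) (lnplus_nonneg b)
  rcases eq_or_lt_of_le ha with h0 | h0
  · rw [← h0, zero_mul]; simpa [lnplus, Real.log_zero] using hR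
  rcases eq_or_lt_of_le hb with h1 | h1
  · rw [← h1, mul_zero]; simpa [lnplus, Real.log_zero] using hR
  refine max_le ?_ hR
  rw [Real.log_mul h0.ne' h1.ne']
  exact add_le_add (le_max_left _ _) (le_max_left _ _)

lemma opNormP_nonneg (p : ℕ) [Fact p.Prime] {d : ℕ} (M : Matrix (Fin d) (Fin d) ℚ_[p]) :
    0 ≤ opNormP p M := norm_nonneg _

lemma opNormP_mul_le (p : ℕ) [Fact p.Prime] {d : ℕ} (A B : Matrix (Fin d) (Fin d) ℚ_[p]) :
    opNormP p (A * B) ≤ opNormP p A * opNormP p B := by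
  unfold opNormP
  rw [Matrix.mulVecLin_mul]
  have h : LinearMap.toContinuousLinearMap (A.mulVecLin ∘ₗ B.mulVecLin)
      = (LinearMap.toContinuousLinearMap A.mulVecLin).comp
        (LinearMap.toContinuousLinearMap B.mulVecLin) := by
    ext x; rfl
  rw [h]
  exact ContinuousLinearMap.opNorm_comp_le _ _

lemma entry_le_opNormP (p : ℕ) [Fact p.Prime] {d : ℕ} (M : Matrix (Fin d) (Fin d) ℚ_[p])
    (i j : Fin d) : ‖M i j‖ ≤ opNormP p M := by
  unfold opNormP
  have h1 : M i j = (M *ᵥ Pi.single j (1 : ℚ_[p])) i := by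
    rw [Matrix.mulVec_single]; exact (mul_one _).symm
  have hs : ‖(Pi.single j (1:ℚ_[p]) : Fin d → ℚ_[p])‖ = 1 := by
    rw [Pi.norm_single]; exact norm_one
  have h2 : ‖(M *ᵥ Pi.single j (1:ℚ_[p]) : Fin d → ℚ_[p])‖
      ≤ ‖LinearMap.toContinuousLinearMap M.mulVecLin‖ := by
    have h3 := ContinuousLinearMap.le_opNorm
      (LinearMap.toContinuousLinearMap M.mulVecLin) (Pi.single j (1:ℚ_[p]))
    rw [hs, mul_one] at h3
    exact h3
  rw [h1]
  exact le_trans (norm_le_pi_norm (M *ᵥ Pi.single j (1:ℚ_[p])) i) h2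

lemma lnplus_opN_mul (p : ℕ) [Fact p.Prime] {d : ℕ} (A B : GL (Fin d) ℚ_[p]) :
    lnplus (opNormP p ((A * B : GL (Fin d) ℚ_[p]) : Matrix (Fin d) (Fin d) ℚ_[p]))
    ≤ lnplus (opNormP p (A : Matrix (Fin d) (Fin d) ℚ_[p]))
      + lnplus (opNormP p (B : Matrix (Fin d) (Fin d) ℚ_[p])) := by
  have h1 : ((A * B : GL (Fin d) ℚ_[p]) : Matrix (Fin d) (Fin d) ℚ_[p])
      = (A : Matrix (Fin d) (Fin d) ℚ_[p]) * (B : Matrix (Fin d) (Fin d) ℚ_[p]) := rfl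
  rw [h1]
  exact le_trans
    (lnplus_le_lnplus (opNormP_nonneg p _) (opNormP_mul_le p _ _))
    (lnplus_mul_le (opNormP_nonneg p _) (opNormP_nonneg p _))

lemma dP_nonneg (p : ℕ) [Fact p.Prime] {d : ℕ} (g h : GL (Fin d) ℚ_[p]) :
    0 ≤ dP p g h := add_nonneg (lnplus_nonneg _) (lnplus_nonneg _)

lemma dP_triangle (p : ℕ) [Fact p.Prime] {d : ℕ} (g k h : GL (Fin d) ℚ_[p]) :
    dP p g h ≤ dP p g k + dP p k h := by
  have e1 : g⁻¹ * h = (g⁻¹ * k) * (k⁻¹ * h) := by group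
  have e2 : h⁻¹ * g = (h⁻¹ * k) * (k⁻¹ * g) := by group
  unfold dP
  rw [e1, e2]
  have t1 := lnplus_opN_mul p (g⁻¹ * k) (k⁻¹ * h)
  have t2 := lnplus_opN_mul p (h⁻¹ * k) (k⁻¹ * g)
  linarith

lemma dP_symm (p : ℕ) [Fact p.Prime] {d : ℕ} (g h : GL (Fin d) ℚ_[p]) :
    dP p g h = dP p h g := add_comm _ _

lemma lnplus_le_dP_one (p : ℕ) [Fact p.Prime] {d : ℕ} (M : GL (Fin d) ℚ_[p]) :
    lnplus (opNormP p (M : Matrix (Fin d) (Fin d) ℚ_[p])) ≤ dP p 1 M := by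
  unfold dP
  rw [inv_one, one_mul, mul_one]
  exact le_add_of_nonneg_right (lnplus_nonneg _)

open Filter in
lemma part1_aux (p : ℕ) [Fact p.Prime] {d : ℕ}
    (lam : Fin d → ℝ) (b₁ b₂ : GL (Fin d) ℚ_[p]) (x : ℕ → GL (Fin d) ℚ_[p])
    (h₁ : Tendsto (fun n : ℕ => (1 / (n : ℝ)) * dP p (x n) (b₁ * LamP p lam n))
      atTop (nhds 0))
    (h₂ : Tendsto (fun n : ℕ => (1 / (n : ℝ)) * dP p (x n) (b₂ * LamP p lam n))
      atTop (nhds 0)) :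
    Tendsto (fun n : ℕ => (1 / (n : ℝ)) *
        dP p 1 ((LamP p lam n)⁻¹ * b₁⁻¹ * b₂ * LamP p lam n)) atTop (nhds 0) := by
  have key : ∀ n : ℕ, dP p 1 ((LamP p lam n)⁻¹ * b₁⁻¹ * b₂ * LamP p lam n)
      ≤ dP p (x n) (b₁ * LamP p lam n) + dP p (x n) (b₂ * LamP p lam n) := by
    intro n
    set Λ := LamP p lam n
    have ha : (1 : GL (Fin d) ℚ_[p])⁻¹ * (Λ⁻¹ * b₁⁻¹ * b₂ * Λ) = (b₁ * Λ)⁻¹ * (b₂ * Λ) := by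
      group
    have hb : (Λ⁻¹ * b₁⁻¹ * b₂ * Λ)⁻¹ * (1 : GL (Fin d) ℚ_[p]) = (b₂ * Λ)⁻¹ * (b₁ * Λ) := by
      group
    have e : dP p 1 (Λ⁻¹ * b₁⁻¹ * b₂ * Λ) = dP p (b₁ * Λ) (b₂ * Λ) := by
      unfold dP; rw [ha, hb]
    rw [e, dP_symm p (x n) (b₁ * Λ)]
    exact dP_triangle p (b₁ * Λ) (x n) (b₂ * Λ)
  have hg : Tendsto (fun n : ℕ => (1 / (n : ℝ)) * dP p (x n) (b₁ * LamP p lam n)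
      + (1 / (n : ℝ)) * dP p (x n) (b₂ * LamP p lam n)) atTop (nhds 0) := by
    simpa using h₁.add h₂
  refine squeeze_zero (fun n => ?_) (fun n => ?_) hg
  · exact mul_nonneg (by positivity) (dP_nonneg p _ _)
  · calc (1 / (n : ℝ)) * dP p 1 ((LamP p lam n)⁻¹ * b₁⁻¹ * b₂ * LamP p lam n)
        ≤ (1 / (n : ℝ)) * (dP p (x n) (b₁ * LamP p lam n) + dP p (x n) (b₂ * LamP p lam n)) :=
          mul_le_mul_of_nonneg_left (key n) (by positivity)
      _ = _ := by ring

open Filter in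
lemma key_aux (p : ℕ) [hp : Fact p.Prime] {d : ℕ}
    (lam : Fin d → ℝ) (c : GL (Fin d) ℚ_[p])
    (hT : Tendsto (fun n : ℕ => (1 / (n : ℝ)) *
        dP p 1 ((LamP p lam n)⁻¹ * (c * LamP p lam n))) atTop (nhds 0)) :
    ∀ i j : Fin d, lam i < lam j →
      ((c : GL (Fin d) ℚ_[p]) : Matrix (Fin d) (Fin d) ℚ_[p]) i j = 0 := by
  intro i j hij
  by_contra h0
  set L := Real.log p with hLdef
  have hp1 : (1 : ℝ) < (p : ℝ) := by exact_mod_cast hp.out.one_lt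
  have hL : 0 < L := Real.log_pos hp1
  set A := ‖((c : GL (Fin d) ℚ_[p]) : Matrix (Fin d) (Fin d) ℚ_[p]) i j‖ with hAdef
  have hA : 0 < A := norm_pos_iff.mpr h0
  set M : ℕ → GL (Fin d) ℚ_[p] := fun n => (LamP p lam n)⁻¹ * (c * LamP p lam n) with hMdef
  -- entry value
  have hval : ∀ n : ℕ, ((M n : GL (Fin d) ℚ_[p]) : Matrix (Fin d) (Fin d) ℚ_[p]) i j
      = (p : ℚ_[p]) ^ (⌊((n : ℝ) * lam i) / L⌋) *
        ((c : GL (Fin d) ℚ_[p]) : Matrix (Fin d) (Fin d) ℚ_[p]) i j *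
        (p : ℚ_[p]) ^ (-⌊((n : ℝ) * lam j) / L⌋) := by
    intro n
    have hcoe1 : (((LamP p lam n)⁻¹ : GL (Fin d) ℚ_[p]) : Matrix (Fin d) (Fin d) ℚ_[p])
        = Matrix.diagonal (fun i => (p : ℚ_[p]) ^ (⌊((n : ℝ) * lam i) / L⌋)) := by
      show Matrix.diagonal (fun i => (p : ℚ_[p]) ^ (-(-⌊((n : ℝ) * lam i) / L⌋))) = _
      simp [neg_neg]
    have hcoe2 : ((LamP p lam n : GL (Fin d) ℚ_[p]) : Matrix (Fin d) (Fin d) ℚ_[p])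
        = Matrix.diagonal (fun i => (p : ℚ_[p]) ^ (-⌊((n : ℝ) * lam i) / L⌋)) := rfl
    show ((((LamP p lam n)⁻¹ : GL (Fin d) ℚ_[p]) : Matrix (Fin d) (Fin d) ℚ_[p]) *
        (((c : GL (Fin d) ℚ_[p]) : Matrix (Fin d) (Fin d) ℚ_[p]) *
         ((LamP p lam n : GL (Fin d) ℚ_[p]) : Matrix (Fin d) (Fin d) ℚ_[p]))) i j = _
    rw [hcoe1, hcoe2, ← Matrix.mul_assoc, Matrix.mul_diagonal, Matrix.diagonal_mul]
  -- norm of entry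
  have hnorm : ∀ n : ℕ, ‖((M n : GL (Fin d) ℚ_[p]) : Matrix (Fin d) (Fin d) ℚ_[p]) i j‖
      = A * (p : ℝ) ^ (⌊((n : ℝ) * lam j) / L⌋ - ⌊((n : ℝ) * lam i) / L⌋) := by
    intro n
    rw [hval n, norm_mul, norm_mul, Padic.norm_p_zpow, Padic.norm_p_zpow, neg_neg]
    have hpR : (p : ℝ) ≠ 0 := by positivity
    rw [zpow_sub₀ hpR]
    rw [← hAdef, _root_.zpow_neg]
    try ring
  -- core per-n lower bound
  have core : ∀ n : ℕ, (n : ℝ) * (lam j - lam i) + (Real.log A - L) ≤ dP p 1 (M n) := by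
    intro n
    set ki : ℤ := ⌊((n : ℝ) * lam i) / L⌋
    set kj : ℤ := ⌊((n : ℝ) * lam j) / L⌋
    have hlog : Real.log (A * (p : ℝ) ^ (kj - ki))
        = Real.log A + ((kj : ℝ) - ki) * L := by
      have hz : (p : ℝ) ^ (kj - ki) ≠ 0 := zpow_ne_zero _ (by positivity)
      rw [Real.log_mul hA.ne' hz, Real.log_zpow]
      push_cast
      ring
    have hki : (ki : ℝ) * L ≤ (n : ℝ) * lam i := by
      have h1 : (ki : ℝ) ≤ ((n : ℝ) * lam i) / L := Int.floor_le _
      have h2 := mul_le_mul_of_nonneg_right h1 hL.le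
      rwa [div_mul_cancel₀ _ hL.ne'] at h2
    have hkj : (n : ℝ) * lam j - L ≤ (kj : ℝ) * L := by
      have h1 : ((n : ℝ) * lam j) / L - 1 ≤ (kj : ℝ) := (Int.sub_one_lt_floor _).le
      have h2 := mul_le_mul_of_nonneg_right h1 hL.le
      rwa [sub_mul, one_mul, div_mul_cancel₀ _ hL.ne'] at h2
    have hstep : (n : ℝ) * (lam j - lam i) + (Real.log A - L)
        ≤ Real.log ‖((M n : GL (Fin d) ℚ_[p]) : Matrix (Fin d) (Fin d) ℚ_[p]) i j‖ := by
      rw [hnorm n, hlog]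
      nlinarith [hki, hkj]
    calc (n : ℝ) * (lam j - lam i) + (Real.log A - L)
        ≤ Real.log ‖((M n : GL (Fin d) ℚ_[p]) : Matrix (Fin d) (Fin d) ℚ_[p]) i j‖ := hstep
      _ ≤ lnplus ‖((M n : GL (Fin d) ℚ_[p]) : Matrix (Fin d) (Fin d) ℚ_[p]) i j‖ :=
          log_le_lnplus _
      _ ≤ lnplus (opNormP p ((M n : GL (Fin d) ℚ_[p]) : Matrix (Fin d) (Fin d) ℚ_[p])) :=
          lnplus_le_lnplus (norm_nonneg _) (entry_le_opNormP p _ i j)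
      _ ≤ dP p 1 (M n) := lnplus_le_dP_one p (M n)
  -- compare limits
  have hle : (fun n : ℕ => (lam j - lam i) + (Real.log A - L) / n)
      ≤ᶠ[atTop] (fun n : ℕ => (1 / (n : ℝ)) * dP p 1 (M n)) := by
    filter_upwards [eventually_ge_atTop 1] with n hn
    have hn0 : (0 : ℝ) < n := by exact_mod_cast Nat.lt_of_lt_of_le Nat.zero_lt_one hn
    have h2 := mul_le_mul_of_nonneg_left (core n) (le_of_lt (one_div_pos.mpr hn0))
    have hne : (n : ℝ) ≠ 0 := hn0.ne'
    have h3 : (1 / (n : ℝ)) * ((n : ℝ) * (lam j - lam i) + (Real.log A - L))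
        = (lam j - lam i) + (Real.log A - L) / n := by
      field_simp
    rw [h3] at h2
    exact h2
  have htg : Tendsto (fun n : ℕ => (lam j - lam i) + (Real.log A - L) / n) atTop
      (nhds (lam j - lam i)) := by
    simpa using tendsto_const_nhds.add (tendsto_const_div_atTop_nhds_zero_nat (Real.log A - L))
  have hfin : lam j - lam i ≤ 0 := le_of_tendsto_of_tendsto htg hT hle
  linarith

lemma pgroup_mul (p : ℕ) [Fact p.Prime] {d : ℕ} (lam : Fin d → ℝ)
    (u v : GL (Fin d) ℚ_[p])
    (hu : ∀ i j : Fin d, lam i < lam j → (u : Matrix (Fin d) (Fin d) ℚ_[p]) i j = 0)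
    (hv : ∀ i j : Fin d, lam i < lam j → (v : Matrix (Fin d) (Fin d) ℚ_[p]) i j = 0) :
    ∀ i j : Fin d, lam i < lam j →
      ((u * v : GL (Fin d) ℚ_[p]) : Matrix (Fin d) (Fin d) ℚ_[p]) i j = 0 := by
  intro i j hij
  show ((u : Matrix (Fin d) (Fin d) ℚ_[p]) * (v : Matrix (Fin d) (Fin d) ℚ_[p])) i j = 0
  rw [Matrix.mul_apply]
  refine Finset.sum_eq_zero fun k _ => ?_
  rcases le_or_gt (lam k) (lam i) with h | h
  · rw [hv k j (lt_of_le_of_lt h hij), mul_zero]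
  · rw [hu i k h, zero_mul]

open Filter in
/-- If `b₁` and `b₂` both satisfy `(1/n)·d_p(x_n, b_i Λ_n) → 0` for the same sequence
`x_n`, then `(1/n)·d_p(e, Λ_n⁻¹ b₁⁻¹ b₂ Λ_n) → 0`, hence `b₁⁻¹b₂ ∈ P_p` and `b₁, b₂`
define the same element of the flag manifold `B_p = GL_d(ℚ_p)/P_p`. -/
theorem same_flag_of_tendsto (p : ℕ) [Fact p.Prime] (d : ℕ)
    (lam : Fin d → ℝ) (hlam : Antitone lam)
    (b₁ b₂ : GL (Fin d) ℚ_[p]) (x : ℕ → GL (Fin d) ℚ_[p])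
    (h₁ : Tendsto (fun n : ℕ => (1 / (n : ℝ)) * dP p (x n) (b₁ * LamP p lam n))
      atTop (nhds 0))
    (h₂ : Tendsto (fun n : ℕ => (1 / (n : ℝ)) * dP p (x n) (b₂ * LamP p lam n))
      atTop (nhds 0)) :
    Tendsto (fun n : ℕ => (1 / (n : ℝ)) *
        dP p 1 ((LamP p lam n)⁻¹ * b₁⁻¹ * b₂ * LamP p lam n)) atTop (nhds 0)
    ∧ (∀ i j : Fin d, lam i < lam j →
        ((b₁⁻¹ * b₂ : GL (Fin d) ℚ_[p]) : Matrix (Fin d) (Fin d) ℚ_[p]) i j = 0)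
    ∧ (fun u => b₁ * u) ''
        {u : GL (Fin d) ℚ_[p] | ∀ i j : Fin d, lam i < lam j →
          (u : Matrix (Fin d) (Fin d) ℚ_[p]) i j = 0}
      = (fun u => b₂ * u) ''
        {u : GL (Fin d) ℚ_[p] | ∀ i j : Fin d, lam i < lam j →
          (u : Matrix (Fin d) (Fin d) ℚ_[p]) i j = 0} := by
  have T12 := part1_aux p lam b₁ b₂ x h₁ h₂
  have T21 := part1_aux p lam b₂ b₁ x h₂ h₁
  have hk12 : ∀ i j : Fin d, lam i < lam j →
      ((b₁⁻¹ * b₂ : GL (Fin d) ℚ_[p]) : Matrix (Fin d) (Fin d) ℚ_[p]) i j = 0 := by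
    apply key_aux p lam (b₁⁻¹ * b₂)
    simpa only [mul_assoc] using T12
  have hk21 : ∀ i j : Fin d, lam i < lam j →
      ((b₂⁻¹ * b₁ : GL (Fin d) ℚ_[p]) : Matrix (Fin d) (Fin d) ℚ_[p]) i j = 0 := by
    apply key_aux p lam (b₂⁻¹ * b₁)
    simpa only [mul_assoc] using T21
  refine ⟨T12, hk12, ?_⟩
  ext y
  constructor
  · rintro ⟨w, hw, rfl⟩
    refine ⟨(b₂⁻¹ * b₁) * w, pgroup_mul p lam _ _ hk21 hw, ?_⟩
    show b₂ * (b₂⁻¹ * b₁ * w) = b₁ * w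
    group
  · rintro ⟨w, hw, rfl⟩
    refine ⟨(b₁⁻¹ * b₂) * w, pgroup_mul p lam _ _ hk12 hw, ?_⟩
    show b₁ * (b₁⁻¹ * b₂ * w) = b₂ * w
    group
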